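/- Let (D, ⊣, ⊢) be an associative dialgebra over a field K (two bilinear associative products satisfying x⊣(y⊣z) = x⊣(y⊢z), (x⊢y)⊣z = x⊢(y⊣z), and (x⊢y)⊢z = (x⊣y)⊢z) and let α : D → D be a dialgebra endomorphism (linear with α(x⊣y) = α(x)⊣α(y) and α(x⊢y) = α(x)⊢α(y)). Then D_α = (D, ⊣_α, ⊢_α, α), where x ⊣_α y = α(x⊣y) and x ⊢_α y = α(x⊢y), is a hom-associative dialgebra. Moreover, if (D', ⊣', ⊢') is another associative dialgebra with dialgebra endomorphism α', and f : D → D' is a dialgebra morphism satisfying f∘α = α'∘f, then f : D_α → D'_{α'} is a morphism of hom-associative dialgebras, i.e. f(x ⊣_α y) = f(x) ⊣'_{α'} f(y), f(x ⊢_α y) = f(x) ⊢'_{α'} f(y), and f∘α = α'∘f. -/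
import Mathlib


/-- Yau twist of an associative dialgebra along a dialgebra
endomorphism is a hom-associative dialgebra, and a dialgebra morphism intertwining
the endomorphisms is a morphism of the twisted hom-associative dialgebras. -/
theorem stmt_8 {K D D' : Type*} [Field K] [AddCommGroup D] [Module K D]
    [AddCommGroup D'] [Module K D']
    (dv vd : D →ₗ[K] D →ₗ[K] D)           -- ⊣, ⊢ on D
    (dv' vd' : D' →ₗ[K] D' →ₗ[K] D')      -- ⊣', ⊢' on D'
    (α : D →ₗ[K] D) (α' : D' →ₗ[K] D') (f : D →ₗ[K] D')
    (hdvassoc : ∀ x y z : D, dv (dv x y) z = dv x (dv y z))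
    (hvdassoc : ∀ x y z : D, vd (vd x y) z = vd x (vd y z))
    (hax1 : ∀ x y z : D, dv x (dv y z) = dv x (vd y z))
    (hax2 : ∀ x y z : D, dv (vd x y) z = vd x (dv y z))
    (hax3 : ∀ x y z : D, vd (vd x y) z = vd (dv x y) z)
    (hαdv : ∀ x y : D, α (dv x y) = dv (α x) (α y))
    (hαvd : ∀ x y : D, α (vd x y) = vd (α x) (α y))
    (hdvassoc' : ∀ x y z : D', dv' (dv' x y) z = dv' x (dv' y z))
    (hvdassoc' : ∀ x y z : D', vd' (vd' x y) z = vd' x (vd' y z))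
    (hax1' : ∀ x y z : D', dv' x (dv' y z) = dv' x (vd' y z))
    (hax2' : ∀ x y z : D', dv' (vd' x y) z = vd' x (dv' y z))
    (hax3' : ∀ x y z : D', vd' (vd' x y) z = vd' (dv' x y) z)
    (hα'dv : ∀ x y : D', α' (dv' x y) = dv' (α' x) (α' y))
    (hα'vd : ∀ x y : D', α' (vd' x y) = vd' (α' x) (α' y))
    (hfdv : ∀ x y : D, f (dv x y) = dv' (f x) (f y))
    (hfvd : ∀ x y : D, f (vd x y) = vd' (f x) (f y))
    (hfα : ∀ x : D, f (α x) = α' (f x)) :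
    let dvα : D → D → D := fun x y => α (dv x y)    -- ⊣_α
    let vdα : D → D → D := fun x y => α (vd x y)    -- ⊢_α
    let dvα' : D' → D' → D' := fun x y => α' (dv' x y)
    let vdα' : D' → D' → D' := fun x y => α' (vd' x y)
    -- D_α is a hom-associative dialgebra:
    (∀ x y z : D, dvα (α x) (dvα y z) = dvα (dvα x y) (α z)) ∧
    (∀ x y z : D, vdα (α x) (vdα y z) = vdα (vdα x y) (α z)) ∧
    (∀ x y : D, α (dvα x y) = dvα (α x) (α y)) ∧
    (∀ x y : D, α (vdα x y) = vdα (α x) (α y)) ∧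
    (∀ x y z : D, dvα (α x) (dvα y z) = dvα (α x) (vdα y z)) ∧
    (∀ x y z : D, dvα (vdα x y) (α z) = vdα (α x) (dvα y z)) ∧
    (∀ x y z : D, vdα (vdα x y) (α z) = vdα (dvα x y) (α z)) ∧
    -- f : D_α → D'_{α'} is a morphism of hom-associative dialgebras:
    (∀ x y : D, f (dvα x y) = dvα' (f x) (f y)) ∧
    (∀ x y : D, f (vdα x y) = vdα' (f x) (f y)) ∧
    (∀ x : D, f (α x) = α' (f x)) := by
  intro dvα vdα dvα' vdα'
  refine ⟨?_, ?_, ?_, ?_, ?_, ?_, ?_, ?_, ?_, hfα⟩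
  · intro x y z; simp only [dvα, ← hαdv, hdvassoc]
  · intro x y z; simp only [vdα, ← hαvd, hvdassoc]
  · intro x y; simp only [dvα, hαdv]
  · intro x y; simp only [vdα, dvα, hαvd]
  · intro x y z; simp only [dvα, vdα, ← hαdv, ← hαvd, hax1]
  · intro x y z; simp only [dvα, vdα, ← hαdv, ← hαvd, hax2]
  · intro x y z; simp only [dvα, vdα, ← hαdv, ← hαvd, hax3]
  · intro x y; simp only [dvα, dvα', hfα, hfdv]
  · intro x y; simp only [vdα, vdα', hfα, hfvd]
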